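/- arXiv:2305.19453 — 6 statements merged into one kernel-verified Lean document; each statement's English description precedes it below -/
import Mathlib

section
/- Let d be a pseudometric consistent with a preference profile σ over m alternatives and n agents. Fix a threshold τ < 1/m and let A' ⊆ A be the set of alternatives whose plurality score (number of agents ranking them first) is at least τ·n. Then A' is nonempty and min_{X∈A'} SC(X) ≤ (1 + 2/(1 − τ·m)) · min_{X∈A} SC(X). -/
/-- Pruning lemma: with threshold `τ < 1/m`, the set `A'` of alternatives with
plurality score at least `τ·n` is nonempty, and its best social cost is within a
factor `1 + 2/(1 − τ·m)` of the overall optimum. Rankings are given by rank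
functions `rk i : A → ℕ` (injective for each agent; lower rank = more preferred),
and `d` is a consistent pseudometric. -/
theorem stmt_2 {N A : Type*} [Fintype N] [Fintype A] [DecidableEq A]
    (hA : 0 < Fintype.card A)
    (rk : N → A → ℕ) (hinj : ∀ i, Function.Injective (rk i))
    (d : (N ⊕ A) → (N ⊕ A) → ℝ)
    (hnn : ∀ a b, 0 ≤ d a b)
    (hself : ∀ a, d a a = 0)
    (hsym : ∀ a b, d a b = d b a)
    (htri : ∀ a b c, d a c ≤ d a b + d b c)
    (hcons : ∀ i X Y, rk i X < rk i Y →
      d (Sum.inl i) (Sum.inr X) ≤ d (Sum.inl i) (Sum.inr Y))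
    (τ : ℝ) (hτ : τ < 1 / (Fintype.card A : ℝ)) :
    ∃ X' : A,
      ((Finset.univ.filter (fun i : N => ∀ Y : A, rk i X' ≤ rk i Y)).card : ℝ)
          ≥ τ * (Fintype.card N : ℝ) ∧
      ∀ Z : A,
        ∑ i : N, d (Sum.inl i) (Sum.inr X') ≤
          (1 + 2 / (1 - τ * (Fintype.card A : ℝ))) *
            ∑ i : N, d (Sum.inl i) (Sum.inr Z) := by
  classical
  haveI : Nonempty A := Fintype.card_pos_iff.mp hA
  set m : ℕ := Fintype.card A with hm
  set n : ℕ := Fintype.card N with hn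
  have hmpos : (0:ℝ) < (m:ℝ) := by exact_mod_cast hA
  have hu : (0:ℝ) < 1 - τ * m := by
    have : τ * m < (1 / (m:ℝ)) * m := by
      exact mul_lt_mul_of_pos_right hτ hmpos
    rw [one_div_mul_cancel (ne_of_gt hmpos)] at this
    linarith
  -- social cost
  set SC : A → ℝ := fun X => ∑ i : N, d (Sum.inl i) (Sum.inr X) with hSC
  have hSCnn : ∀ X, 0 ≤ SC X := fun X => Finset.sum_nonneg (fun i _ => hnn _ _)
  -- top alternative of each agent
  have htopex : ∀ i : N, ∃ X : A, ∀ Y, rk i X ≤ rk i Y := by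
    intro i
    obtain ⟨X, -, hX⟩ := Finset.exists_min_image Finset.univ (rk i) Finset.univ_nonempty
    exact ⟨X, fun Y => hX Y (Finset.mem_univ Y)⟩
  choose top htop using htopex
  have hplur_iff : ∀ (i : N) (X : A), (∀ Y, rk i X ≤ rk i Y) ↔ top i = X := by
    intro i X
    constructor
    · intro h
      exact hinj i (le_antisymm (htop i X) (h (top i)))
    · rintro rfl; exact htop i
  set plur : A → ℕ := fun X => (Finset.univ.filter (fun i : N => top i = X)).card with hplur
  have hfilter_eq : ∀ X : A,
      Finset.univ.filter (fun i : N => ∀ Y, rk i X ≤ rk i Y)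
        = Finset.univ.filter (fun i : N => top i = X) := by
    intro X
    apply Finset.filter_congr
    intro i _
    simpa using hplur_iff i X
  have hsum : n = ∑ X : A, plur X :=
    Finset.card_eq_sum_card_fiberwise (fun i _ => Finset.mem_univ (top i))
  -- pigeonhole: some alternative has plurality ≥ n/m ≥ τ n
  have hex : ∃ X : A, τ * n ≤ (plur X : ℝ) := by
    by_contra hcon
    push_neg at hcon
    have h1 : ∀ X : A, (plur X : ℝ) < (n:ℝ) / m := by
      intro X
      calc (plur X : ℝ) < τ * n := hcon X
        _ ≤ (1 / (m:ℝ)) * n := by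
            exact mul_le_mul_of_nonneg_right (le_of_lt hτ) (Nat.cast_nonneg n)
        _ = (n:ℝ) / m := by ring
    have h2 : (∑ X : A, (plur X : ℝ)) < ∑ _X : A, (n:ℝ) / m :=
      Finset.sum_lt_sum_of_nonempty Finset.univ_nonempty (fun X _ => h1 X)
    rw [Finset.sum_const, Finset.card_univ, nsmul_eq_mul] at h2
    have h3 : (m:ℝ) * ((n:ℝ)/m) = (n:ℝ) := by field_simp
    have h4 : (∑ X : A, (plur X : ℝ)) = (n:ℝ) := by
      rw [← Nat.cast_sum]; exact_mod_cast hsum.symm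
    rw [h3, h4] at h2
    exact lt_irrefl _ h2
  -- A' and its SC-minimizer X'
  set A' : Finset A := Finset.univ.filter (fun X => τ * n ≤ (plur X : ℝ)) with hA'
  have hA'ne : A'.Nonempty := by
    obtain ⟨X, hX⟩ := hex
    exact ⟨X, by simp [hA', hX]⟩
  obtain ⟨X', hX'mem, hX'min⟩ := Finset.exists_min_image A' SC hA'ne
  have hX'plur : τ * n ≤ (plur X' : ℝ) := (Finset.mem_filter.mp hX'mem).2
  refine ⟨X', ?_, ?_⟩
  · rw [ge_iff_le, hfilter_eq X']
    exact hX'plur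
  intro Z
  by_cases hZ : τ * n ≤ (plur Z : ℝ)
  · -- Z ∈ A'
    have h1 : SC X' ≤ SC Z := hX'min Z (by simp [hA', hZ])
    have h2 : 0 ≤ 2 / (1 - τ * m) := by positivity
    have := hSCnn Z
    nlinarith
  · push_neg at hZ
    have hτn : 0 < τ * n := lt_of_le_of_lt (Nat.cast_nonneg _) hZ
    have hnne : (n:ℝ) ≠ 0 := by
      intro h
      rw [h, mul_zero] at hτn
      exact lt_irrefl _ hτn
    have hnpos : (0:ℝ) < n := lt_of_le_of_ne (Nat.cast_nonneg n) (Ne.symm hnne)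
    -- the set T of agents whose top is in A'
    set T : Finset N := Finset.univ.filter (fun i => τ * n ≤ (plur (top i) : ℝ)) with hT
    set Tc : Finset N := Finset.univ.filter (fun i => ¬ (τ * n ≤ (plur (top i) : ℝ))) with hTc
    set B : Finset A := Finset.univ.filter (fun X => ¬ (τ * n ≤ (plur X : ℝ))) with hB
    have hTcard : T.card + Tc.card = n := by
      rw [hT, hTc]
      exact Finset.card_filter_add_card_filter_not _
    have hTcB : Tc.card = ∑ X ∈ B, plur X := by
      have h0 : Tc.card = ∑ X ∈ B, (Tc.filter (fun i => top i = X)).card := by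
        apply Finset.card_eq_sum_card_fiberwise
        intro i hi
        rw [hTc, Finset.mem_coe, Finset.mem_filter] at hi
        rw [hB, Finset.mem_coe, Finset.mem_filter]
        exact ⟨Finset.mem_univ _, hi.2⟩
      rw [h0]
      apply Finset.sum_congr rfl
      intro X hX
      rw [hB, Finset.mem_filter] at hX
      congr 1
      ext i
      simp only [hTc, Finset.mem_filter, Finset.mem_univ, true_and]
      constructor
      · rintro ⟨-, h⟩; exact h
      · rintro rfl; exact ⟨hX.2, rfl⟩
    have hTcle : (Tc.card : ℝ) ≤ (m:ℝ) * (τ * n) := by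
      rw [hTcB]
      push_cast
      calc (∑ X ∈ B, (plur X : ℝ)) ≤ ∑ _X ∈ B, τ * n := by
            apply Finset.sum_le_sum
            intro X hX
            rw [hB, Finset.mem_filter] at hX
            push_neg at hX
            exact le_of_lt hX.2
        _ = B.card * (τ * n) := by rw [Finset.sum_const, nsmul_eq_mul]
        _ ≤ (m:ℝ) * (τ * n) := by
            apply mul_le_mul_of_nonneg_right _ (le_of_lt hτn)
            have := Finset.card_filter_le Finset.univ (fun X => ¬ (τ * n ≤ (plur X : ℝ)))
            rw [Finset.card_univ] at this
            exact_mod_cast this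
    have hTge : (n:ℝ) * (1 - τ * m) ≤ (T.card : ℝ) := by
      have : (T.card : ℝ) + (Tc.card : ℝ) = (n:ℝ) := by exact_mod_cast hTcard
      nlinarith
    have hTne : T.Nonempty := by
      rw [← Finset.card_pos]
      have : (0:ℝ) < (T.card : ℝ) := lt_of_lt_of_le (by nlinarith) hTge
      exact_mod_cast this
    obtain ⟨i, hiT, himin⟩ :=
      Finset.exists_min_image T (fun j => d (Sum.inl j) (Sum.inr Z)) hTne
    set W : A := top i with hW
    have hWmem : W ∈ A' := by
      rw [hA', Finset.mem_filter]
      exact ⟨Finset.mem_univ _, (Finset.mem_filter.mp hiT).2⟩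
    set diZ : ℝ := d (Sum.inl i) (Sum.inr Z) with hdiZ
    have hdiZnn : 0 ≤ diZ := hnn _ _
    -- d(i, W) ≤ d(i, Z)
    have hiW : d (Sum.inl i) (Sum.inr W) ≤ diZ := by
      by_cases hZW : Z = W
      · simp [hdiZ, hZW]
      · apply hcons
        rcases lt_or_eq_of_le (htop i Z) with h | h
        · exact h
        · exact absurd (hinj i h).symm hZW
    -- d(Z, W) ≤ 2 d(i, Z)
    have hZW2 : d (Sum.inr Z) (Sum.inr W) ≤ 2 * diZ := by
      calc d (Sum.inr Z) (Sum.inr W)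
          ≤ d (Sum.inr Z) (Sum.inl i) + d (Sum.inl i) (Sum.inr W) := htri _ _ _
        _ ≤ diZ + diZ := by
            rw [hsym (Sum.inr Z) (Sum.inl i)]
            exact add_le_add le_rfl hiW
        _ = 2 * diZ := by ring
    -- SC W ≤ SC Z + n * d(Z,W)
    have hSCW : SC W ≤ SC Z + (n:ℝ) * d (Sum.inr Z) (Sum.inr W) := by
      rw [hSC]
      calc (∑ j : N, d (Sum.inl j) (Sum.inr W))
          ≤ ∑ j : N, (d (Sum.inl j) (Sum.inr Z) + d (Sum.inr Z) (Sum.inr W)) := by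
            apply Finset.sum_le_sum
            intro j _
            exact htri _ _ _
        _ = SC Z + (n:ℝ) * d (Sum.inr Z) (Sum.inr W) := by
            rw [Finset.sum_add_distrib, Finset.sum_const, Finset.card_univ,
              nsmul_eq_mul, hSC, hn]
    -- |T| * diZ ≤ SC Z
    have hTd : (T.card : ℝ) * diZ ≤ SC Z := by
      calc (T.card : ℝ) * diZ = ∑ _j ∈ T, diZ := by
            rw [Finset.sum_const, nsmul_eq_mul]
        _ ≤ ∑ j ∈ T, d (Sum.inl j) (Sum.inr Z) := by
            apply Finset.sum_le_sum
            intro j hj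
            exact himin j hj
        _ ≤ ∑ j : N, d (Sum.inl j) (Sum.inr Z) := by
            apply Finset.sum_le_sum_of_subset_of_nonneg (Finset.subset_univ T)
            intro j _ _
            exact hnn _ _
    have hX'W : SC X' ≤ SC W := hX'min W hWmem
    have hstep1 : SC X' ≤ SC Z + (n:ℝ) * d (Sum.inr Z) (Sum.inr W) :=
      le_trans hX'W hSCW
    have hstep2 : (n:ℝ) * d (Sum.inr Z) (Sum.inr W) * (1 - τ * m) ≤ 2 * SC Z := by
      have h1 : (n:ℝ) * d (Sum.inr Z) (Sum.inr W) ≤ (n:ℝ) * (2 * diZ) :=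
        mul_le_mul_of_nonneg_left hZW2 (le_of_lt hnpos)
      nlinarith [mul_le_mul_of_nonneg_left hTge hdiZnn, hTd]
    have hfinal : SC X' * (1 - τ * m) ≤ (1 - τ * m + 2) * SC Z := by
      nlinarith [mul_le_mul_of_nonneg_right hstep1 (le_of_lt hu)]
    calc SC X' = SC X' * (1 - τ * m) / (1 - τ * m) := by field_simp
      _ ≤ (1 - τ * m + 2) * SC Z / (1 - τ * m) := by
          apply div_le_div_of_nonneg_right hfinal hu.le
      _ = (1 + 2 / (1 - τ * m)) * SC Z := by
          field_simp
end

section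
/- Let w be an X-truncated weight function for preference profile σ, i.e., w : N × A → [0,1] satisfies w(i,Y) = 0 whenever agent i strictly prefers X to Y, and Σ_{Y : Y ⪰_i X} w(i,Y) = 1 for every agent i. Then for any pseudometric d consistent with σ, SC(X) ≥ (1/2) · Σ_{Y∈A} w⁺(Y) · d(X,Y), where w⁺(Y) = Σ_{i∈N} w(i,Y). -/
/-- For an `X`-truncated weight function `w`,
`SC(X) ≥ (1/2) Σ_Y w⁺(Y) d(X,Y)` under any consistent pseudometric. -/
theorem stmt_6 {N A : Type*} [Fintype N] [Fintype A] [DecidableEq A]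
    (rk : N → A → ℕ) (hinj : ∀ i, Function.Injective (rk i))
    (d : (N ⊕ A) → (N ⊕ A) → ℝ)
    (hnn : ∀ a b, 0 ≤ d a b)
    (hself : ∀ a, d a a = 0)
    (hsym : ∀ a b, d a b = d b a)
    (htri : ∀ a b c, d a c ≤ d a b + d b c)
    (hcons : ∀ i Y Z, rk i Y < rk i Z →
      d (Sum.inl i) (Sum.inr Y) ≤ d (Sum.inl i) (Sum.inr Z))
    (X : A) (w : N → A → ℝ)
    (hw01 : ∀ i Y, w i Y ∈ Set.Icc (0 : ℝ) 1)
    (hw0 : ∀ i Y, rk i X < rk i Y → w i Y = 0)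
    (hw1 : ∀ i, ∑ Y ∈ Finset.univ.filter (fun Y : A => rk i Y ≤ rk i X), w i Y = 1) :
    ∑ i : N, d (Sum.inl i) (Sum.inr X) ≥
      (1 / 2) * ∑ Y : A, (∑ i : N, w i Y) * d (Sum.inr X) (Sum.inr Y) := by
  have hsumw : ∀ i, ∑ Y : A, w i Y = 1 := by
    intro i
    rw [← hw1 i, ← Finset.sum_filter_add_sum_filter_not Finset.univ
      (fun Y : A => rk i Y ≤ rk i X) (w i)]
    have : ∑ Y ∈ Finset.univ.filter (fun Y : A => ¬ rk i Y ≤ rk i X), w i Y = 0 := by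
      apply Finset.sum_eq_zero
      intro Y hY
      simp only [Finset.mem_filter, not_le] at hY
      exact hw0 i Y hY.2
    rw [this, add_zero]
  have key : ∀ i, ∑ Y : A, w i Y * d (Sum.inr X) (Sum.inr Y)
      ≤ 2 * d (Sum.inl i) (Sum.inr X) := by
    intro i
    have hle : ∀ Y : A, w i Y * d (Sum.inr X) (Sum.inr Y)
        ≤ w i Y * (2 * d (Sum.inl i) (Sum.inr X)) := by
      intro Y
      rcases lt_or_ge (rk i X) (rk i Y) with h | h
      · rw [hw0 i Y h]; simp
      · have hiY : d (Sum.inl i) (Sum.inr Y) ≤ d (Sum.inl i) (Sum.inr X) := by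
          rcases lt_or_eq_of_le h with h' | h'
          · exact hcons i Y X h'
          · have : Y = X := hinj i h'
            rw [this]
        have hXY : d (Sum.inr X) (Sum.inr Y) ≤ 2 * d (Sum.inl i) (Sum.inr X) := by
          calc d (Sum.inr X) (Sum.inr Y)
              ≤ d (Sum.inr X) (Sum.inl i) + d (Sum.inl i) (Sum.inr Y) := htri _ _ _
            _ ≤ d (Sum.inl i) (Sum.inr X) + d (Sum.inl i) (Sum.inr X) := by
                rw [hsym (Sum.inr X) (Sum.inl i)]
                exact add_le_add le_rfl hiY
            _ = 2 * d (Sum.inl i) (Sum.inr X) := by ring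
        exact mul_le_mul_of_nonneg_left hXY (hw01 i Y).1
    calc ∑ Y : A, w i Y * d (Sum.inr X) (Sum.inr Y)
        ≤ ∑ Y : A, w i Y * (2 * d (Sum.inl i) (Sum.inr X)) :=
          Finset.sum_le_sum (fun Y _ => hle Y)
      _ = (∑ Y : A, w i Y) * (2 * d (Sum.inl i) (Sum.inr X)) := by
          rw [Finset.sum_mul]
      _ = 2 * d (Sum.inl i) (Sum.inr X) := by rw [hsumw i, one_mul]
  have hswap : ∑ Y : A, (∑ i : N, w i Y) * d (Sum.inr X) (Sum.inr Y)
      = ∑ i : N, ∑ Y : A, w i Y * d (Sum.inr X) (Sum.inr Y) := by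
    rw [Finset.sum_comm]
    congr 1; ext Y
    rw [Finset.sum_mul]
  rw [ge_iff_le, hswap]
  have := Finset.sum_le_sum (fun i (_ : i ∈ Finset.univ) => key i)
  calc (1/2) * ∑ i : N, ∑ Y : A, w i Y * d (Sum.inr X) (Sum.inr Y)
      ≤ (1/2) * ∑ i : N, 2 * d (Sum.inl i) (Sum.inr X) := by
        apply mul_le_mul_of_nonneg_left this; norm_num
    _ = ∑ i : N, d (Sum.inl i) (Sum.inr X) := by
        rw [← Finset.mul_sum]; ring
end

section
/- Let X ∈ A have social cost at most D·min_{Z∈A} SC(Z) under pseudometric d consistent with profile σ, and let w be an X-truncated weight function with w⁺(Y)=Σ_i w(i,Y). Then for any probability distribution p over A, the distortion of p satisfies (Σ_Y p(Y)·SC(Y)) / min_Z SC(Z) ≤ D · (1 + 2n · (Σ_Y p(Y)·d(X,Y)) / (Σ_Y w⁺(Y)·d(X,Y))), assuming Σ_Y w⁺(Y)·d(X,Y) > 0. -/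
/-- If `SC(X) ≤ D · min_Z SC(Z)` and `w` is an `X`-truncated weight function,
then any distribution `p` over alternatives has metric distortion at most
`D·(1 + 2n·(Σ_Y p(Y)d(X,Y))/(Σ_Y w⁺(Y)d(X,Y)))`. -/
theorem stmt_7 {N A : Type*} [Fintype N] [Fintype A] [DecidableEq A]
    (rk : N → A → ℕ) (hinj : ∀ i, Function.Injective (rk i))
    (d : (N ⊕ A) → (N ⊕ A) → ℝ)
    (hnn : ∀ a b, 0 ≤ d a b)
    (hself : ∀ a, d a a = 0)
    (hsym : ∀ a b, d a b = d b a)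
    (htri : ∀ a b c, d a c ≤ d a b + d b c)
    (hcons : ∀ i Y Z, rk i Y < rk i Z →
      d (Sum.inl i) (Sum.inr Y) ≤ d (Sum.inl i) (Sum.inr Z))
    (X : A) (D : ℝ) (hD1 : 1 ≤ D)
    (hD : ∀ Z : A, ∑ i : N, d (Sum.inl i) (Sum.inr X) ≤
      D * ∑ i : N, d (Sum.inl i) (Sum.inr Z))
    (w : N → A → ℝ)
    (hw01 : ∀ i Y, w i Y ∈ Set.Icc (0 : ℝ) 1)
    (hw0 : ∀ i Y, rk i X < rk i Y → w i Y = 0)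
    (hw1 : ∀ i, ∑ Y ∈ Finset.univ.filter (fun Y : A => rk i Y ≤ rk i X), w i Y = 1)
    (p : A → ℝ) (hp : ∀ Y, 0 ≤ p Y) (hpsum : ∑ Y : A, p Y = 1)
    (hpos : 0 < ∑ Y : A, (∑ i : N, w i Y) * d (Sum.inr X) (Sum.inr Y)) :
    ∀ Z : A,
      ∑ Y : A, p Y * ∑ i : N, d (Sum.inl i) (Sum.inr Y) ≤
        D * (1 + 2 * (Fintype.card N : ℝ) *
            (∑ Y : A, p Y * d (Sum.inr X) (Sum.inr Y)) /
            (∑ Y : A, (∑ i : N, w i Y) * d (Sum.inr X) (Sum.inr Y))) *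
          ∑ i : N, d (Sum.inl i) (Sum.inr Z) := by
  intro Z
  set nn : ℝ := (Fintype.card N : ℝ) with hnn'
  set SCX := ∑ i : N, d (Sum.inl i) (Sum.inr X) with hSCX
  set SCZ := ∑ i : N, d (Sum.inl i) (Sum.inr Z) with hSCZ
  set P := ∑ Y : A, p Y * d (Sum.inr X) (Sum.inr Y) with hP
  set W := ∑ Y : A, (∑ i : N, w i Y) * d (Sum.inr X) (Sum.inr Y) with hW
  have hnnpos : (0:ℝ) ≤ nn := Nat.cast_nonneg _
  have hPnn : 0 ≤ P := Finset.sum_nonneg fun Y _ => mul_nonneg (hp Y) (hnn _ _)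
  have hSCZnn : 0 ≤ SCZ := Finset.sum_nonneg fun i _ => hnn _ _
  have hSCXD : SCX ≤ D * SCZ := hD Z
  -- per-agent bound: Σ_Y w i Y * d(X,Y) ≤ 2 d(i,X)
  have key : ∀ i : N, ∑ Y : A, w i Y * d (Sum.inr X) (Sum.inr Y)
      ≤ 2 * d (Sum.inl i) (Sum.inr X) := by
    intro i
    have hfil : ∑ Y : A, w i Y * d (Sum.inr X) (Sum.inr Y)
        = ∑ Y ∈ Finset.univ.filter (fun Y : A => rk i Y ≤ rk i X),
            w i Y * d (Sum.inr X) (Sum.inr Y) := by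
      rw [Finset.sum_filter]
      refine Finset.sum_congr rfl fun Y _ => ?_
      by_cases h : rk i Y ≤ rk i X
      · simp [h]
      · simp [h, hw0 i Y (lt_of_not_ge h)]
    rw [hfil]
    calc ∑ Y ∈ Finset.univ.filter (fun Y : A => rk i Y ≤ rk i X),
            w i Y * d (Sum.inr X) (Sum.inr Y)
        ≤ ∑ Y ∈ Finset.univ.filter (fun Y : A => rk i Y ≤ rk i X),
            w i Y * (2 * d (Sum.inl i) (Sum.inr X)) := by
          refine Finset.sum_le_sum fun Y hY => ?_
          simp only [Finset.mem_filter] at hY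
          refine mul_le_mul_of_nonneg_left ?_ (hw01 i Y).1
          have hdiY : d (Sum.inl i) (Sum.inr Y) ≤ d (Sum.inl i) (Sum.inr X) := by
            rcases eq_or_lt_of_le hY.2 with h | h
            · have : Y = X := hinj i h
              subst this; exact le_refl _
            · exact hcons i Y X h
          calc d (Sum.inr X) (Sum.inr Y)
              ≤ d (Sum.inr X) (Sum.inl i) + d (Sum.inl i) (Sum.inr Y) := htri _ _ _
            _ = d (Sum.inl i) (Sum.inr X) + d (Sum.inl i) (Sum.inr Y) := by rw [hsym]
            _ ≤ 2 * d (Sum.inl i) (Sum.inr X) := by linarith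
      _ = 2 * d (Sum.inl i) (Sum.inr X) := by
          rw [← Finset.sum_mul, hw1 i, one_mul]
  -- W ≤ 2 SCX
  have hW2 : W ≤ 2 * SCX := by
    have : W = ∑ i : N, ∑ Y : A, w i Y * d (Sum.inr X) (Sum.inr Y) := by
      rw [hW, Finset.sum_comm]
      exact Finset.sum_congr rfl fun Y _ => Finset.sum_mul _ _ _
    rw [this, hSCX, Finset.mul_sum]
    exact Finset.sum_le_sum fun i _ => key i
  -- LHS ≤ SCX + nn * P
  have hLHS : ∑ Y : A, p Y * ∑ i : N, d (Sum.inl i) (Sum.inr Y) ≤ SCX + nn * P := by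
    have step : ∀ Y : A, ∑ i : N, d (Sum.inl i) (Sum.inr Y)
        ≤ SCX + nn * d (Sum.inr X) (Sum.inr Y) := by
      intro Y
      have : ∑ i : N, d (Sum.inl i) (Sum.inr Y)
          ≤ ∑ i : N, (d (Sum.inl i) (Sum.inr X) + d (Sum.inr X) (Sum.inr Y)) :=
        Finset.sum_le_sum fun i _ => htri _ _ _
      simpa [Finset.sum_add_distrib, hnn', mul_comm, nsmul_eq_mul] using this
    calc ∑ Y : A, p Y * ∑ i : N, d (Sum.inl i) (Sum.inr Y)
        ≤ ∑ Y : A, p Y * (SCX + nn * d (Sum.inr X) (Sum.inr Y)) :=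
          Finset.sum_le_sum fun Y _ => mul_le_mul_of_nonneg_left (step Y) (hp Y)
      _ = SCX + nn * P := by
          simp only [mul_add, Finset.sum_add_distrib, ← Finset.sum_mul, hpsum,
            one_mul, hP, Finset.mul_sum]
          congr 1
          exact Finset.sum_congr rfl fun Y _ => by ring
  -- combine
  have hW2D : W ≤ 2 * (D * SCZ) := by linarith
  have h1 : (nn * P) * W ≤ (nn * P) * (2 * (D * SCZ)) :=
    mul_le_mul_of_nonneg_left hW2D (mul_nonneg hnnpos hPnn)
  have h2 : nn * P ≤ 2 * D * nn * P * SCZ / W := by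
    rw [le_div_iff₀ hpos]
    nlinarith [h1]
  have hRHS : D * (1 + 2 * nn * P / W) * SCZ = D * SCZ + 2 * D * nn * P * SCZ / W := by
    field_simp
  calc ∑ Y : A, p Y * ∑ i : N, d (Sum.inl i) (Sum.inr Y)
      ≤ SCX + nn * P := hLHS
    _ ≤ D * SCZ + 2 * D * nn * P * SCZ / W := by linarith
    _ = D * (1 + 2 * nn * P / W) * SCZ := hRHS.symm
end

section
/- Suppose f¹ and f² are randomized voting rules whose output distributions on every profile achieve metric distortion at most D₁ᴹ and D₂ᴹ, and utilitarian distortion at most D₁ᵁ and D₂ᵁ, respectively. For β ∈ [0,1], the mixture rule f that runs f¹ with probability β and f² with probability 1−β achieves metric distortion at most β·D₁ᴹ + (1−β)·D₂ᴹ and utilitarian distortion at most D₁ᵁ·D₂ᵁ/(β·D₂ᵁ + (1−β)·D₁ᵁ). -/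
/-- Mixing two randomized voting rules with probability `β` combines their
metric distortion guarantees linearly and their utilitarian distortion
guarantees harmonically. Profiles are rank functions `σ : N → A → ℕ`. -/
theorem stmt_12 {N A : Type*} [Fintype N] [Fintype A]
    (D1M D2M D1U D2U : ℝ)
    (hD1M : 0 < D1M) (hD2M : 0 < D2M) (hD1U : 0 < D1U) (hD2U : 0 < D2U)
    (β : ℝ) (hβ0 : 0 ≤ β) (hβ1 : β ≤ 1)
    (f1 f2 : (N → A → ℕ) → A → ℝ)
    (hf1nn : ∀ σ X, 0 ≤ f1 σ X) (hf1sum : ∀ σ, ∑ X : A, f1 σ X = 1)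
    (hf2nn : ∀ σ X, 0 ≤ f2 σ X) (hf2sum : ∀ σ, ∑ X : A, f2 σ X = 1)
    -- metric distortion guarantees of f1 and f2
    (hf1M : ∀ (σ : N → A → ℕ) (d : (N ⊕ A) → (N ⊕ A) → ℝ),
      (∀ a b, 0 ≤ d a b) → (∀ a, d a a = 0) → (∀ a b, d a b = d b a) →
      (∀ a b c, d a c ≤ d a b + d b c) →
      (∀ i X Y, σ i X < σ i Y →
        d (Sum.inl i) (Sum.inr X) ≤ d (Sum.inl i) (Sum.inr Y)) →
      ∀ Z : A, ∑ X : A, f1 σ X * ∑ i : N, d (Sum.inl i) (Sum.inr X) ≤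
        D1M * ∑ i : N, d (Sum.inl i) (Sum.inr Z))
    (hf2M : ∀ (σ : N → A → ℕ) (d : (N ⊕ A) → (N ⊕ A) → ℝ),
      (∀ a b, 0 ≤ d a b) → (∀ a, d a a = 0) → (∀ a b, d a b = d b a) →
      (∀ a b c, d a c ≤ d a b + d b c) →
      (∀ i X Y, σ i X < σ i Y →
        d (Sum.inl i) (Sum.inr X) ≤ d (Sum.inl i) (Sum.inr Y)) →
      ∀ Z : A, ∑ X : A, f2 σ X * ∑ i : N, d (Sum.inl i) (Sum.inr X) ≤
        D2M * ∑ i : N, d (Sum.inl i) (Sum.inr Z))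
    -- utilitarian distortion guarantees of f1 and f2
    (hf1U : ∀ (σ : N → A → ℕ) (u : N → A → ℝ),
      (∀ i X, 0 ≤ u i X) → (∀ i, ∑ X : A, u i X = 1) →
      (∀ i X Y, σ i X < σ i Y → u i Y ≤ u i X) →
      ∀ Z : A, ∑ i : N, u i Z ≤ D1U * ∑ X : A, f1 σ X * ∑ i : N, u i X)
    (hf2U : ∀ (σ : N → A → ℕ) (u : N → A → ℝ),
      (∀ i X, 0 ≤ u i X) → (∀ i, ∑ X : A, u i X = 1) →
      (∀ i X Y, σ i X < σ i Y → u i Y ≤ u i X) →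
      ∀ Z : A, ∑ i : N, u i Z ≤ D2U * ∑ X : A, f2 σ X * ∑ i : N, u i X) :
    -- the mixture rule achieves the combined guarantees
    (∀ (σ : N → A → ℕ) (d : (N ⊕ A) → (N ⊕ A) → ℝ),
      (∀ a b, 0 ≤ d a b) → (∀ a, d a a = 0) → (∀ a b, d a b = d b a) →
      (∀ a b c, d a c ≤ d a b + d b c) →
      (∀ i X Y, σ i X < σ i Y →
        d (Sum.inl i) (Sum.inr X) ≤ d (Sum.inl i) (Sum.inr Y)) →
      ∀ Z : A,
        ∑ X : A, (β * f1 σ X + (1 - β) * f2 σ X) *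
            ∑ i : N, d (Sum.inl i) (Sum.inr X) ≤
          (β * D1M + (1 - β) * D2M) * ∑ i : N, d (Sum.inl i) (Sum.inr Z)) ∧
    (∀ (σ : N → A → ℕ) (u : N → A → ℝ),
      (∀ i X, 0 ≤ u i X) → (∀ i, ∑ X : A, u i X = 1) →
      (∀ i X Y, σ i X < σ i Y → u i Y ≤ u i X) →
      ∀ Z : A,
        ∑ i : N, u i Z ≤
          (D1U * D2U / (β * D2U + (1 - β) * D1U)) *
            ∑ X : A, (β * f1 σ X + (1 - β) * f2 σ X) * ∑ i : N, u i X) := by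
  have hβ1' : 0 ≤ 1 - β := by linarith
  constructor
  · intro σ d h0 h1 h2 h3 h4 Z
    have H1 := hf1M σ d h0 h1 h2 h3 h4 Z
    have H2 := hf2M σ d h0 h1 h2 h3 h4 Z
    have hsplit : ∑ X : A, (β * f1 σ X + (1 - β) * f2 σ X) *
        ∑ i : N, d (Sum.inl i) (Sum.inr X) =
        β * ∑ X : A, f1 σ X * ∑ i : N, d (Sum.inl i) (Sum.inr X) +
        (1 - β) * ∑ X : A, f2 σ X * ∑ i : N, d (Sum.inl i) (Sum.inr X) := by
      rw [Finset.mul_sum, Finset.mul_sum, ← Finset.sum_add_distrib]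
      exact Finset.sum_congr rfl fun x _ => by ring
    rw [hsplit]
    nlinarith [mul_le_mul_of_nonneg_left H1 hβ0, mul_le_mul_of_nonneg_left H2 hβ1']
  · intro σ u h0 h1 h2 Z
    have H1 := hf1U σ u h0 h1 h2 Z
    have H2 := hf2U σ u h0 h1 h2 Z
    have hc : 0 < β * D2U + (1 - β) * D1U := by
      rcases eq_or_lt_of_le hβ0 with h | h
      · nlinarith
      · nlinarith [mul_pos h hD2U, mul_nonneg hβ1' hD1U.le]
    have hsplit : ∑ X : A, (β * f1 σ X + (1 - β) * f2 σ X) * ∑ i : N, u i X =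
        β * ∑ X : A, f1 σ X * ∑ i : N, u i X +
        (1 - β) * ∑ X : A, f2 σ X * ∑ i : N, u i X := by
      rw [Finset.mul_sum, Finset.mul_sum, ← Finset.sum_add_distrib]
      exact Finset.sum_congr rfl fun x _ => by ring
    rw [hsplit, div_mul_eq_mul_div, le_div_iff₀ hc]
    nlinarith [mul_le_mul_of_nonneg_left H1 (mul_nonneg hβ0 hD2U.le),
      mul_le_mul_of_nonneg_left H2 (mul_nonneg hβ1' hD1U.le)]
end

section
/- For reals S₁, S₂ with 0 ≤ S₁ ≤ S₂ and S₁ + S₂ ≤ 2·n·H (where n > 0, H ≥ 1, m ≥ 1), the inequality (S₂ − S₁)/(2m) + S₁²/(2·n·m·H) ≥ S₂²/(4·n·m·H) holds. -/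
/-- Key algebraic step in the top-`t` Truncated Harmonic analysis. -/
theorem stmt_17 (n m H S1 S2 : ℝ) (hn : 0 < n) (hm : 1 ≤ m) (hH : 1 ≤ H)
    (hS1 : 0 ≤ S1) (hS12 : S1 ≤ S2) (hsum : S1 + S2 ≤ 2 * n * H) :
    (S2 - S1) / (2 * m) + S1 ^ 2 / (2 * n * m * H) ≥
      S2 ^ 2 / (4 * n * m * H) := by
  have hm0 : (0:ℝ) < m := lt_of_lt_of_le one_pos hm
  have hH0 : (0:ℝ) < H := lt_of_lt_of_le one_pos hH
  have key : S2 ^ 2 ≤ 2 * n * H * (S2 - S1) + 2 * S1 ^ 2 := by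
    nlinarith [mul_nonneg (sub_nonneg.2 hS12) (sub_nonneg.2 hsum)]
  have heq : (S2 - S1) / (2 * m) + S1 ^ 2 / (2 * n * m * H)
      = (2 * n * H * (S2 - S1) + 2 * S1 ^ 2) / (4 * n * m * H) := by
    field_simp
    ring
  rw [ge_iff_le, heq]
  exact div_le_div_of_nonneg_right key (by positivity) |>.trans_eq rfl
end

section
/- Fix ε > 0. The Pruned Plurality Veto rule, which restricts attention to alternatives of plurality score at least εn/((6+ε)m) and then applies any rule with metric distortion at most 3 on the restricted profile, achieves metric distortion at most 9 + ε. -/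
/-- Pruned Plurality Veto: restricting to alternatives with plurality score at
least `εn/((6+ε)m)` and applying a base rule whose output `X̂` has social cost
within a factor `3` of the best alternative of the restricted set yields metric
distortion at most `9 + ε`. -/
theorem stmt_19 {N A : Type*} [Fintype N] [Fintype A] [DecidableEq A]
    (hA : 0 < Fintype.card A)
    (ε : ℝ) (hε : 0 < ε)
    (rk : N → A → ℕ) (hinj : ∀ i, Function.Injective (rk i))
    (d : (N ⊕ A) → (N ⊕ A) → ℝ)
    (hnn : ∀ a b, 0 ≤ d a b)
    (hself : ∀ a, d a a = 0)
    (hsym : ∀ a b, d a b = d b a)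
    (htri : ∀ a b c, d a c ≤ d a b + d b c)
    (hcons : ∀ i X Y, rk i X < rk i Y →
      d (Sum.inl i) (Sum.inr X) ≤ d (Sum.inl i) (Sum.inr Y))
    (Xhat : A)
    -- X̂ belongs to the pruned set A'
    (hXhat : ((Finset.univ.filter (fun i : N => ∀ Y : A, rk i Xhat ≤ rk i Y)).card : ℝ)
        ≥ ε * (Fintype.card N : ℝ) / ((6 + ε) * (Fintype.card A : ℝ)))
    -- the base rule guarantees metric distortion 3 on the pruned set A'
    (hbase : ∀ Z : A,
      ((Finset.univ.filter (fun i : N => ∀ Y : A, rk i Z ≤ rk i Y)).card : ℝ)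
          ≥ ε * (Fintype.card N : ℝ) / ((6 + ε) * (Fintype.card A : ℝ)) →
      ∑ i : N, d (Sum.inl i) (Sum.inr Xhat) ≤
        3 * ∑ i : N, d (Sum.inl i) (Sum.inr Z)) :
    ∀ Z : A,
      ∑ i : N, d (Sum.inl i) (Sum.inr Xhat) ≤
        (9 + ε) * ∑ i : N, d (Sum.inl i) (Sum.inr Z) := by
  classical
  intro Z
  have hSCnn : ∀ X : A, (0:ℝ) ≤ ∑ i : N, d (Sum.inl i) (Sum.inr X) :=
    fun X => Finset.sum_nonneg fun i _ => hnn _ _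
  rcases isEmpty_or_nonempty N with hN | hN
  · rw [Finset.univ_eq_empty, Finset.sum_empty, Finset.sum_empty, mul_zero]
  -- main case
  haveI : Nonempty A := Fintype.card_pos_iff.mp hA
  set τ : ℝ := ε * (Fintype.card N : ℝ) / ((6 + ε) * (Fintype.card A : ℝ)) with hτ
  have hnpos : 0 < (Fintype.card N : ℝ) := by
    exact_mod_cast Fintype.card_pos
  have hmpos : 0 < (Fintype.card A : ℝ) := by exact_mod_cast hA
  have h6ε : (0:ℝ) < 6 + ε := by linarith
  -- each voter has a top alternative
  have htop : ∀ i : N, ∃ X : A, ∀ Y, rk i X ≤ rk i Y := by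
    intro i
    obtain ⟨X, -, hX⟩ := Finset.exists_min_image Finset.univ (rk i)
      ⟨Classical.arbitrary A, Finset.mem_univ _⟩
    exact ⟨X, fun Y => hX Y (Finset.mem_univ Y)⟩
  choose top htopspec using htop
  set P : A → Prop := fun X =>
    ((Finset.univ.filter (fun i : N => ∀ Y : A, rk i X ≤ rk i Y)).card : ℝ) ≥ τ with hP
  have hfib : ∀ X : A, (Finset.univ.filter (fun i : N => ∀ Y : A, rk i X ≤ rk i Y))
      = Finset.univ.filter (fun i : N => top i = X) := by
    intro X
    ext i
    simp only [Finset.mem_filter, Finset.mem_univ, true_and]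
    constructor
    · intro h
      exact hinj i (le_antisymm (htopspec i X) (h (top i)))
    · intro h Y
      rw [← h]
      exact htopspec i Y
  set G : Finset N := Finset.univ.filter (fun i => P (top i)) with hG
  set B : Finset N := Finset.univ.filter (fun i => ¬ P (top i)) with hB
  -- bound on bad voters
  have hbadsum : B.card = ∑ X ∈ Finset.univ.filter (fun X : A => ¬ P X),
      (B.filter (fun i => top i = X)).card := by
    apply Finset.card_eq_sum_card_fiberwise
    intro i hi
    simp only [hB, Finset.mem_coe, Finset.mem_filter, Finset.mem_univ, true_and] at hi ⊢
    exact hi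
  have hbad : (B.card : ℝ) ≤ (Fintype.card A : ℝ) * τ := by
    rw [hbadsum]
    push_cast
    have hstep : ∀ X ∈ Finset.univ.filter (fun X : A => ¬ P X),
        ((B.filter (fun i => top i = X)).card : ℝ) ≤ τ := by
      intro X hX
      simp only [Finset.mem_filter, Finset.mem_univ, true_and] at hX
      have h1 : (B.filter (fun i => top i = X)).card
          ≤ (Finset.univ.filter (fun i : N => top i = X)).card :=
        Finset.card_le_card (Finset.filter_subset_filter _ (Finset.filter_subset _ _))
      have h2 : ¬ (((Finset.univ.filter (fun i : N => top i = X)).card : ℝ) ≥ τ) := by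
        rw [← hfib X]; exact hX
      push_neg at h2
      calc ((B.filter (fun i => top i = X)).card : ℝ)
          ≤ ((Finset.univ.filter (fun i : N => top i = X)).card : ℝ) := by exact_mod_cast h1
        _ ≤ τ := le_of_lt h2
    calc ∑ X ∈ Finset.univ.filter (fun X : A => ¬ P X),
          ((B.filter (fun i => top i = X)).card : ℝ)
        ≤ (Finset.univ.filter (fun X : A => ¬ P X)).card • τ :=
          Finset.sum_le_card_nsmul _ _ _ hstep
      _ = ((Finset.univ.filter (fun X : A => ¬ P X)).card : ℝ) * τ := by
          rw [nsmul_eq_mul]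
      _ ≤ (Fintype.card A : ℝ) * τ := by
          have : (Finset.univ.filter (fun X : A => ¬ P X)).card ≤ Fintype.card A :=
            Finset.card_filter_le _ _
          have hτnn : 0 ≤ τ := by
            rw [hτ]; positivity
          apply mul_le_mul_of_nonneg_right _ hτnn
          exact_mod_cast this
  have hmτ : (Fintype.card A : ℝ) * τ = ε * (Fintype.card N : ℝ) / (6 + ε) := by
    rw [hτ]; field_simp
  have hGB : (G.card : ℝ) + (B.card : ℝ) = (Fintype.card N : ℝ) := by
    have := Finset.card_filter_add_card_filter_not
      (s := Finset.univ) (p := fun i : N => P (top i))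
    exact_mod_cast this
  have hGlb : 6 * (Fintype.card N : ℝ) / (6 + ε) ≤ (G.card : ℝ) := by
    rw [hmτ] at hbad
    rw [le_div_iff₀ h6ε] at hbad
    rw [div_le_iff₀ h6ε]
    nlinarith [hGB]
  have hGpos : 0 < G.card := by
    rcases Nat.eq_zero_or_pos G.card with h | h
    · exfalso
      rw [h, Nat.cast_zero] at hGlb
      have : 0 < 6 * (Fintype.card N : ℝ) / (6 + ε) := div_pos (by nlinarith) h6ε
      linarith
    · exact h
  obtain ⟨i0, hi0G, hi0min⟩ := Finset.exists_min_image G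
    (fun i => d (Sum.inl i) (Sum.inr Z)) (Finset.card_pos.mp hGpos)
  set δ : ℝ := d (Sum.inl i0) (Sum.inr Z) with hδ
  have hδnn : 0 ≤ δ := hnn _ _
  -- |G| * δ ≤ SC(Z)
  have hsumG : (G.card : ℝ) * δ ≤ ∑ i : N, d (Sum.inl i) (Sum.inr Z) := by
    calc (G.card : ℝ) * δ = G.card • δ := by rw [nsmul_eq_mul]
      _ ≤ ∑ i ∈ G, d (Sum.inl i) (Sum.inr Z) :=
          Finset.card_nsmul_le_sum _ _ _ (fun i hi => hi0min i hi)
      _ ≤ ∑ i : N, d (Sum.inl i) (Sum.inr Z) :=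
          Finset.sum_le_sum_of_subset_of_nonneg (Finset.subset_univ G)
            (fun i _ _ => hnn _ _)
  have hd6 : 6 * ((Fintype.card N : ℝ) * δ) ≤ (6 + ε) * ∑ i : N, d (Sum.inl i) (Sum.inr Z) := by
    have h1 : 6 * (Fintype.card N : ℝ) / (6 + ε) * δ ≤ (G.card : ℝ) * δ :=
      mul_le_mul_of_nonneg_right hGlb hδnn
    rw [div_mul_eq_mul_div, div_le_iff₀ h6ε] at h1
    nlinarith [hsumG, hδnn]
  -- top i0 is close
  set W : A := top i0 with hW
  have hiW : d (Sum.inl i0) (Sum.inr W) ≤ δ := by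
    rcases lt_or_eq_of_le (htopspec i0 Z) with h | h
    · exact hcons i0 _ Z h
    · have : W = Z := hinj i0 h
      rw [this]
  have hZW : d (Sum.inr Z) (Sum.inr W) ≤ 2 * δ := by
    calc d (Sum.inr Z) (Sum.inr W)
        ≤ d (Sum.inr Z) (Sum.inl i0) + d (Sum.inl i0) (Sum.inr W) := htri _ _ _
      _ = δ + d (Sum.inl i0) (Sum.inr W) := by rw [hsym (Sum.inr Z) (Sum.inl i0)]
      _ ≤ δ + δ := by linarith [hiW]
      _ = 2 * δ := by ring
  have hSCW : ∑ i : N, d (Sum.inl i) (Sum.inr W)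
      ≤ (∑ i : N, d (Sum.inl i) (Sum.inr Z)) + (Fintype.card N : ℝ) * (2 * δ) := by
    calc ∑ i : N, d (Sum.inl i) (Sum.inr W)
        ≤ ∑ i : N, (d (Sum.inl i) (Sum.inr Z) + d (Sum.inr Z) (Sum.inr W)) :=
          Finset.sum_le_sum (fun i _ => htri _ _ _)
      _ = (∑ i : N, d (Sum.inl i) (Sum.inr Z)) + (Fintype.card N : ℝ) * d (Sum.inr Z) (Sum.inr W) := by
          rw [Finset.sum_add_distrib, Finset.sum_const, Finset.card_univ, nsmul_eq_mul]
      _ ≤ (∑ i : N, d (Sum.inl i) (Sum.inr Z)) + (Fintype.card N : ℝ) * (2 * δ) := by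
          have := mul_le_mul_of_nonneg_left hZW (le_of_lt hnpos)
          linarith
  have hPW : P W := by
    have := hi0G
    rw [hG, Finset.mem_filter] at this
    exact this.2
  have hb : ∑ i : N, d (Sum.inl i) (Sum.inr Xhat) ≤ 3 * ∑ i : N, d (Sum.inl i) (Sum.inr W) :=
    hbase W hPW
  nlinarith [hSCnn Z, hd6, hSCW, hb, hδnn, hnpos]
end
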